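/- Let 0 ≤ α < 4/π and suppose F(Q) ≥ (1 − απ/4) tr_{P⁰}(D⁰Q) ≥ 0 for all Q in the variational set 𝒮_Λ (where tr_{P⁰}(D⁰Q) = tr(|D⁰|Q⁺⁺) − tr(|D⁰|Q⁻⁻) ≥ 0). Then the BDF energy 𝓔(Q) = F(Q) − α D(ρ_Q, n) + (α/2) D(ρ_Q, ρ_Q) satisfies 𝓔(Q) + (α/2) D(n, n) ≥ 0 for all Q ∈ 𝒮_Λ; in particular 𝓔 is bounded below on 𝒮_Λ by −(α/2) D(n,n). -/

import Mathlib

open Real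

theorem stmt_14 {S : Type*} {C : Type*} [NormedAddCommGroup C] [InnerProductSpace ℝ C]
    (α : ℝ) (hα0 : 0 ≤ α) (hα : α < 4 / π)
    (F : S → ℝ) (trD : S → ℝ) (ρ : S → C) (n : C)
    (htrD : ∀ Q : S, 0 ≤ trD Q)
    (hF : ∀ Q : S, (1 - α * π / 4) * trD Q ≤ F Q) :
    ∀ Q : S,
      0 ≤ (F Q - α * (inner ℝ (ρ Q) n : ℝ) + (α / 2) * (inner ℝ (ρ Q) (ρ Q) : ℝ))
            + (α / 2) * (inner ℝ n n : ℝ) := by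
  intro Q
  have hπ : (0:ℝ) < π := pi_pos
  have hαπ : α * π < 4 := (lt_div_iff₀ hπ).mp hα
  have h1 : 0 ≤ 1 - α * π / 4 := by nlinarith
  have hFQ : 0 ≤ F Q := le_trans (mul_nonneg h1 (htrD Q)) (hF Q)
  have key : (0:ℝ) ≤ inner ℝ (ρ Q - n) (ρ Q - n) := real_inner_self_nonneg
  rw [inner_sub_sub_self] at key
  have hcomm : (inner ℝ n (ρ Q) : ℝ) = inner ℝ (ρ Q) n := real_inner_comm _ _
  nlinarith [key, hFQ, hα0]
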